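/- arXiv:1305.4435 — 2 statements merged into one kernel-verified Lean document; each statement's English description precedes it below -/
import Mathlib

section
/- The kernel of the ring homomorphism C[x,y,z] → C[t] sending x ↦ t^3, y ↦ t^4, z ↦ t^5 is the ideal generated by the three binomials y^2 − xz, x^2 y − z^2, and x^3 − yz. -/
open Polynomial

lemma key3 (a b c : ℂ[X])
    (h : Polynomial.expand ℂ 3 a + Polynomial.expand ℂ 3 b * X ^ 4
        + Polynomial.expand ℂ 3 c * X ^ 5 = 0) :
    a = 0 ∧ b = 0 ∧ c = 0 := by
  have h3 : ∀ n, (Polynomial.expand ℂ 3 a).coeff n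
      + (Polynomial.expand ℂ 3 b * X ^ 4).coeff n
      + (Polynomial.expand ℂ 3 c * X ^ 5).coeff n = 0 := by
    intro n
    rw [← coeff_add, ← coeff_add, h, coeff_zero]
  have three : (0:ℕ) < 3 := by norm_num
  refine ⟨?_, ?_, ?_⟩ <;> ext k
  · have hh := h3 (3 * k)
    rw [coeff_expand three, coeff_mul_X_pow', coeff_mul_X_pow',
      if_pos ⟨k, rfl⟩] at hh
    by_cases h4 : 4 ≤ 3 * k
    · rw [if_pos h4, if_pos (by omega : 5 ≤ 3 * k), coeff_expand three,
        coeff_expand three, if_neg (by omega), if_neg (by omega)] at hh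
      simpa [Nat.mul_div_cancel_left] using hh
    · rw [if_neg h4, if_neg (by omega)] at hh
      simpa [Nat.mul_div_cancel_left] using hh
  · have hh := h3 (3 * k + 4)
    rw [coeff_expand three, if_neg (by omega), coeff_mul_X_pow',
      if_pos (by omega), coeff_expand three,
      if_pos (by omega : (3:ℕ) ∣ 3 * k + 4 - 4), coeff_mul_X_pow'] at hh
    by_cases h5 : 5 ≤ 3 * k + 4
    · rw [if_pos h5, coeff_expand three, if_neg (by omega)] at hh
      simpa [Nat.mul_div_cancel_left, show 3 * k + 4 - 4 = 3 * k by omega] using hh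
    · rw [if_neg h5] at hh
      simpa [Nat.mul_div_cancel_left, show 3 * k + 4 - 4 = 3 * k by omega] using hh
  · have hh := h3 (3 * k + 5)
    rw [coeff_expand three, if_neg (by omega), coeff_mul_X_pow',
      if_pos (by omega), coeff_expand three, if_neg (by omega),
      coeff_mul_X_pow', if_pos (by omega), coeff_expand three,
      if_pos (by omega : (3:ℕ) ∣ 3 * k + 5 - 5)] at hh
    simpa [Nat.mul_div_cancel_left, show 3 * k + 5 - 5 = 3 * k by omega] using hh

open Polynomial

noncomputable def eMap : ℂ[X] →ₐ[ℂ] MvPolynomial (Fin 3) ℂ :=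
  Polynomial.aeval (MvPolynomial.X 0)

lemma reduce3 (f : MvPolynomial (Fin 3) ℂ) :
    ∃ a b c : ℂ[X],
      f - (eMap a + eMap b * MvPolynomial.X 1 + eMap c * MvPolynomial.X 2) ∈
        Ideal.span ({(MvPolynomial.X 1) ^ 2 - MvPolynomial.X 0 * MvPolynomial.X 2,
          (MvPolynomial.X 0) ^ 2 * MvPolynomial.X 1 - (MvPolynomial.X 2) ^ 2,
          (MvPolynomial.X 0) ^ 3 - MvPolynomial.X 1 * MvPolynomial.X 2} :
          Set (MvPolynomial (Fin 3) ℂ)) := by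
  set I := Ideal.span ({(MvPolynomial.X 1) ^ 2 - MvPolynomial.X 0 * MvPolynomial.X 2,
          (MvPolynomial.X 0) ^ 2 * MvPolynomial.X 1 - (MvPolynomial.X 2) ^ 2,
          (MvPolynomial.X 0) ^ 3 - MvPolynomial.X 1 * MvPolynomial.X 2} :
          Set (MvPolynomial (Fin 3) ℂ)) with hI
  have hg1 : (MvPolynomial.X 1 : MvPolynomial (Fin 3) ℂ) ^ 2
      - MvPolynomial.X 0 * MvPolynomial.X 2 ∈ I :=
    Ideal.subset_span (by left; rfl)
  have hg2 : (MvPolynomial.X 0 : MvPolynomial (Fin 3) ℂ) ^ 2 * MvPolynomial.X 1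
      - (MvPolynomial.X 2) ^ 2 ∈ I :=
    Ideal.subset_span (by right; left; rfl)
  have hg3 : (MvPolynomial.X 0 : MvPolynomial (Fin 3) ℂ) ^ 3
      - MvPolynomial.X 1 * MvPolynomial.X 2 ∈ I :=
    Ideal.subset_span (by right; right; rfl)
  induction f using MvPolynomial.induction_on with
  | C r =>
      refine ⟨Polynomial.C r, 0, 0, ?_⟩
      simp [eMap, MvPolynomial.algebraMap_eq]
  | add p q hp hq =>
      obtain ⟨a, b, c, h1⟩ := hp
      obtain ⟨a', b', c', h2⟩ := hq
      refine ⟨a + a', b + b', c + c', ?_⟩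
      have : p + q - (eMap (a + a') + eMap (b + b') * MvPolynomial.X 1
            + eMap (c + c') * MvPolynomial.X 2)
          = (p - (eMap a + eMap b * MvPolynomial.X 1 + eMap c * MvPolynomial.X 2))
            + (q - (eMap a' + eMap b' * MvPolynomial.X 1 + eMap c' * MvPolynomial.X 2)) := by
        simp only [map_add]; ring
      rw [this]
      exact Ideal.add_mem _ h1 h2
  | mul_X p i hp =>
      obtain ⟨a, b, c, h1⟩ := hp
      fin_cases i
      · refine ⟨a * X, b * X, c * X, ?_⟩
        show p * MvPolynomial.X 0 - _ ∈ I
        have : p * MvPolynomial.X 0 - (eMap (a * X) + eMap (b * X) * MvPolynomial.X 1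
              + eMap (c * X) * MvPolynomial.X 2)
            = (p - (eMap a + eMap b * MvPolynomial.X 1 + eMap c * MvPolynomial.X 2))
              * MvPolynomial.X 0 := by
          simp only [map_mul, eMap, Polynomial.aeval_X]; ring
        rw [this]
        exact Ideal.mul_mem_right _ _ h1
      · refine ⟨c * X ^ 3, a, b * X, ?_⟩
        show p * MvPolynomial.X 1 - _ ∈ I
        have : p * MvPolynomial.X 1 - (eMap (c * X ^ 3) + eMap a * MvPolynomial.X 1
              + eMap (b * X) * MvPolynomial.X 2)
            = (p - (eMap a + eMap b * MvPolynomial.X 1 + eMap c * MvPolynomial.X 2))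
              * MvPolynomial.X 1
              + eMap b * ((MvPolynomial.X 1) ^ 2 - MvPolynomial.X 0 * MvPolynomial.X 2)
              - eMap c * ((MvPolynomial.X 0) ^ 3 - MvPolynomial.X 1 * MvPolynomial.X 2) := by
          simp only [map_mul, map_pow, eMap, Polynomial.aeval_X]; ring
        rw [this]
        exact Ideal.sub_mem _
          (Ideal.add_mem _ (Ideal.mul_mem_right _ _ h1) (Ideal.mul_mem_left _ _ hg1))
          (Ideal.mul_mem_left _ _ hg3)
      · refine ⟨b * X ^ 3, c * X ^ 2, a, ?_⟩
        show p * MvPolynomial.X 2 - _ ∈ I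
        have : p * MvPolynomial.X 2 - (eMap (b * X ^ 3) + eMap (c * X ^ 2) * MvPolynomial.X 1
              + eMap a * MvPolynomial.X 2)
            = (p - (eMap a + eMap b * MvPolynomial.X 1 + eMap c * MvPolynomial.X 2))
              * MvPolynomial.X 2
              - eMap b * ((MvPolynomial.X 0) ^ 3 - MvPolynomial.X 1 * MvPolynomial.X 2)
              - eMap c * ((MvPolynomial.X 0) ^ 2 * MvPolynomial.X 1 - (MvPolynomial.X 2) ^ 2) := by
          simp only [map_mul, map_pow, eMap, Polynomial.aeval_X]; ring
        rw [this]
        exact Ideal.sub_mem _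
          (Ideal.sub_mem _ (Ideal.mul_mem_right _ _ h1) (Ideal.mul_mem_left _ _ hg3))
          (Ideal.mul_mem_left _ _ hg2)

/-- The kernel of the map ℂ[x,y,z] → ℂ[t], x ↦ t³, y ↦ t⁴, z ↦ t⁵, is generated by
y² − xz, x²y − z², x³ − yz. -/
theorem stmt3 :
    RingHom.ker (MvPolynomial.aeval
        ![(Polynomial.X : Polynomial ℂ) ^ 3, Polynomial.X ^ 4, Polynomial.X ^ 5] :
      MvPolynomial (Fin 3) ℂ →ₐ[ℂ] Polynomial ℂ) =
    Ideal.span {(MvPolynomial.X 1) ^ 2 - MvPolynomial.X 0 * MvPolynomial.X 2,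
      (MvPolynomial.X 0) ^ 2 * MvPolynomial.X 1 - (MvPolynomial.X 2) ^ 2,
      (MvPolynomial.X 0) ^ 3 - MvPolynomial.X 1 * MvPolynomial.X 2} := by
  set ψ := (MvPolynomial.aeval
        ![(Polynomial.X : Polynomial ℂ) ^ 3, Polynomial.X ^ 4, Polynomial.X ^ 5] :
      MvPolynomial (Fin 3) ℂ →ₐ[ℂ] Polynomial ℂ) with hψ
  have hv0 : ψ (MvPolynomial.X 0) = X ^ 3 := by simp [hψ]
  have hv1 : ψ (MvPolynomial.X 1) = X ^ 4 := by simp [hψ]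
  have hv2 : ψ (MvPolynomial.X 2) = X ^ 5 := by simp [hψ]
  have hle : Ideal.span ({(MvPolynomial.X 1) ^ 2 - MvPolynomial.X 0 * MvPolynomial.X 2,
      (MvPolynomial.X 0) ^ 2 * MvPolynomial.X 1 - (MvPolynomial.X 2) ^ 2,
      (MvPolynomial.X 0) ^ 3 - MvPolynomial.X 1 * MvPolynomial.X 2} :
        Set (MvPolynomial (Fin 3) ℂ)) ≤ RingHom.ker ψ := by
    rw [Ideal.span_le]
    rintro g (rfl | rfl | rfl) <;>
      · simp only [SetLike.mem_coe, RingHom.mem_ker, map_sub, map_mul, map_pow, hv0, hv1, hv2]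
        ring
  have hcomp : ∀ a : ℂ[X], ψ (eMap a) = Polynomial.expand ℂ 3 a := by
    intro a
    rw [eMap, ← Polynomial.aeval_algHom_apply, hv0, Polynomial.expand_eq_comp_X_pow,
      Polynomial.comp_eq_aeval]
  apply le_antisymm _ hle
  intro f hf
  obtain ⟨a, b, c, hm⟩ := reduce3 f
  have hker : ψ (f - (eMap a + eMap b * MvPolynomial.X 1 + eMap c * MvPolynomial.X 2)) = 0 :=
    hle hm
  rw [map_sub, (show ψ f = 0 from hf), zero_sub, neg_eq_zero, map_add, map_add,
    map_mul, map_mul, hv1, hv2, hcomp, hcomp, hcomp] at hker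
  obtain ⟨ha, hb, hc⟩ := key3 a b c hker
  subst ha hb hc
  simpa using hm
end

section
/- Let X be an m×n generic matrix with m ≤ n and let I_r(X) be the ideal of r×r minors. Johnson's formula J(I_r(X)^c) = ∩_{i=1}^{r} I_i(X)^{(⌊c(r+1−i)⌋ + 1 − (n−i+1)(m−i+1))} implies that the log canonical threshold of I_r(X) equals min_{1 ≤ i ≤ r} (n−i+1)(m−i+1)/(r+1−i). In particular, for a 4×5 generic matrix, lct(I_2(X)) = 10 and lct(I_3(X)) = 6. -/
/-- Johnson's formula 𝒥(I_r(X)^c) = ∩_{i=1}^r I_i(X)^(⌊c(r+1−i)⌋ + 1 − (n−i+1)(m−i+1))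
implies that lct(I_r(X)) = min_{1≤i≤r} (n−i+1)(m−i+1)/(r+1−i): for each i, the least
c > 0 making the exponent ⌊c(r+1−i)⌋ + 1 − (n−i+1)(m−i+1) positive is
(n−i+1)(m−i+1)/(r+1−i).  In particular, for a 4×5 generic matrix this minimum is 10
for r = 2 and 6 for r = 3, so lct(I₂(X)) = 10 and lct(I₃(X)) = 6. -/
theorem stmt10 (m n r : ℕ) (hr : 0 < r) (hrm : r ≤ m) (hmn : m ≤ n) :
    (∀ i ∈ Finset.Icc 1 r,
      IsLeast {c : ℚ | 0 < c ∧
          0 < ⌊c * ((r : ℚ) + 1 - (i : ℚ))⌋ + 1 - ((n : ℤ) - i + 1) * ((m : ℤ) - i + 1)}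
        (((n : ℚ) - i + 1) * ((m : ℚ) - i + 1) / ((r : ℚ) + 1 - i))) ∧
    (Finset.Icc 1 2).inf' (by norm_num)
        (fun i : ℕ => ((5 : ℚ) - i + 1) * ((4 : ℚ) - i + 1) / ((2 : ℚ) + 1 - i)) = 10 ∧
    (Finset.Icc 1 3).inf' (by norm_num)
        (fun i : ℕ => ((5 : ℚ) - i + 1) * ((4 : ℚ) - i + 1) / ((3 : ℚ) + 1 - i)) = 6 := by
  refine ⟨?_, ?_, ?_⟩
  · intro i hi
    simp only [Finset.mem_Icc] at hi
    obtain ⟨hi1, hir⟩ := hi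
    have hiq : (i : ℚ) ≤ r := by exact_mod_cast hir
    have hk : (0:ℚ) < (r:ℚ) + 1 - i := by linarith
    have hmq : (i : ℚ) ≤ m := by exact_mod_cast hir.trans hrm
    have hnq : (i : ℚ) ≤ n := by exact_mod_cast (hir.trans hrm).trans hmn
    have hm' : (1:ℚ) ≤ (m:ℚ) - i + 1 := by linarith
    have hn' : (1:ℚ) ≤ (n:ℚ) - i + 1 := by linarith
    have hN : (1:ℚ) ≤ ((n:ℚ) - i + 1) * ((m:ℚ) - i + 1) := by nlinarith
    have hcast : ((n:ℚ) - i + 1) * ((m:ℚ) - i + 1)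
        = ((((n:ℤ) - i + 1) * ((m:ℤ) - i + 1) : ℤ) : ℚ) := by push_cast; ring
    constructor
    · refine ⟨by positivity, ?_⟩
      have hmul : (((n:ℚ) - i + 1) * ((m:ℚ) - i + 1) / ((r:ℚ)+1-i)) * ((r:ℚ)+1-i)
          = ((n:ℚ) - i + 1) * ((m:ℚ) - i + 1) := by field_simp
      rw [hmul, hcast, Int.floor_intCast]
      omega
    · rintro c ⟨hc0, hfl⟩
      have h1 : ((n:ℤ) - i + 1) * ((m:ℤ) - i + 1) ≤ ⌊c * ((r:ℚ) + 1 - i)⌋ := by omega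
      have h2 : ((((n:ℤ) - i + 1) * ((m:ℤ) - i + 1) : ℤ) : ℚ) ≤ c * ((r:ℚ) + 1 - i) :=
        Int.le_floor.mp h1
      rw [← hcast] at h2
      rw [div_le_iff₀ hk]
      linarith
  · refine le_antisymm ?_ ?_
    · have h1 : (1:ℕ) ∈ Finset.Icc 1 2 := by decide
      have := Finset.inf'_le
        (fun i : ℕ => ((5:ℚ) - i + 1) * ((4:ℚ) - i + 1) / ((2:ℚ) + 1 - i)) h1
      exact this.trans_eq (by norm_num)
    · refine Finset.le_inf' _ _ fun i hi => ?_
      simp only [Finset.mem_Icc] at hi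
      obtain ⟨hi1, hi2⟩ := hi
      interval_cases i <;> norm_num
  · refine le_antisymm ?_ ?_
    · have h1 : (2:ℕ) ∈ Finset.Icc 1 3 := by decide
      have := Finset.inf'_le
        (fun i : ℕ => ((5:ℚ) - i + 1) * ((4:ℚ) - i + 1) / ((3:ℚ) + 1 - i)) h1
      exact this.trans_eq (by norm_num)
    · refine Finset.le_inf' _ _ fun i hi => ?_
      simp only [Finset.mem_Icc] at hi
      obtain ⟨hi1, hi2⟩ := hi
      interval_cases i <;> norm_num
end
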